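/- Let R be a commutative ring, n ≥ 1, and let A and U be n × n matrices over R with U upper triangular (U_{ij} = 0 whenever i > j). Then for every 1 ≤ i ≤ n, the determinant of the i × i submatrix of A·U on the last i rows and the first i columns equals the determinant of the i × i submatrix of A on the last i rows and the first i columns, multiplied by U_{11}·U_{22}⋯U_{ii}. In particular, the lower-left i × i minors of a matrix are, up to the factor ∏_{j≤i} U_{jj}, invariant under right multiplication by upper triangular matrices. -/
import Mathlib


/-- Let `R` be a commutative ring, `n ≥ 1`, and `A`, `U` be `n × n` matrices over `R`
with `U` upper triangular.  Then for every `1 ≤ i ≤ n`, the determinant of the `i × i`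
submatrix of `A * U` on the last `i` rows and first `i` columns equals the determinant
of the `i × i` submatrix of `A` on the last `i` rows and first `i` columns, times
`U₁₁ ⋯ U_{ii}`. -/
theorem lower_left_minor_mul_upper_triangular
    {R : Type*} [CommRing R] {n : ℕ} (hn : 1 ≤ n)
    (A U : Matrix (Fin n) (Fin n) R)
    (hU : ∀ i j : Fin n, j < i → U i j = 0)
    (i : ℕ) (hi1 : 1 ≤ i) (hin : i ≤ n) :
    Matrix.det (Matrix.of fun r c : Fin i =>
        (A * U) ⟨n - i + r.1, by have := r.isLt; omega⟩ ⟨c.1, by have := c.isLt; omega⟩) =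
      Matrix.det (Matrix.of fun r c : Fin i =>
        A ⟨n - i + r.1, by have := r.isLt; omega⟩ ⟨c.1, by have := c.isLt; omega⟩) *
      ∏ j : Fin i, U ⟨j.1, by have := j.isLt; omega⟩ ⟨j.1, by have := j.isLt; omega⟩ := by
  set B : Matrix (Fin i) (Fin i) R := Matrix.of fun r c : Fin i =>
    A ⟨n - i + r.1, by have := r.isLt; omega⟩ ⟨c.1, by have := c.isLt; omega⟩ with hB
  set T : Matrix (Fin i) (Fin i) R := Matrix.of fun r c : Fin i =>
    U ⟨r.1, by have := r.isLt; omega⟩ ⟨c.1, by have := c.isLt; omega⟩ with hT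
  have hTtri : ∀ a b : Fin i, b < a → T a b = 0 := by
    intro a b hab
    exact hU _ _ (by exact_mod_cast hab)
  have key : (Matrix.of fun r c : Fin i =>
      (A * U) ⟨n - i + r.1, by have := r.isLt; omega⟩ ⟨c.1, by have := c.isLt; omega⟩)
      = B * T := by
    ext r c
    simp only [Matrix.of_apply, Matrix.mul_apply, hB, hT]
    rw [show (Finset.univ : Finset (Fin n)) =
        (Finset.univ : Finset (Fin i)).map (Fin.castLEEmb hin) ∪
          ((Finset.univ : Finset (Fin n)).filter (fun k => i ≤ k.1)) by
      ext k
      simp only [Finset.mem_univ, Finset.mem_union, Finset.mem_map, Finset.mem_filter,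
        Fin.castLEEmb, Fin.castLE, Function.Embedding.coeFn_mk, Fin.ext_iff, true_iff,
        true_and]
      by_cases hk : k.1 < i
      · exact Or.inl ⟨⟨k.1, hk⟩, rfl⟩
      · exact Or.inr (by omega)]
    rw [Finset.sum_union, Finset.sum_map]
    · have h2 : ∑ k ∈ (Finset.univ : Finset (Fin n)).filter (fun k => i ≤ k.1),
          A ⟨n - i + r.1, by have := r.isLt; omega⟩ k * U k ⟨c.1, by have := c.isLt; omega⟩ = 0 := by
        apply Finset.sum_eq_zero
        intro k hk
        simp only [Finset.mem_filter] at hk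
        rw [hU k _ (by simp [Fin.lt_def]; omega), mul_zero]
      rw [h2, add_zero]
      apply Finset.sum_congr rfl
      intro k _
      rfl
    · rw [Finset.disjoint_left]
      intro k hk hk'
      simp only [Finset.mem_map, Finset.mem_filter] at hk hk'
      obtain ⟨a, _, rfl⟩ := hk
      simp [Fin.castLEEmb, Fin.castLE] at hk'
      omega
  rw [key, Matrix.det_mul, Matrix.det_of_upperTriangular hTtri]
  rfl
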